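/- (Main theorem: return gap between the true environment and the learned world model.) Let γ ∈ [0,1), let μ₀ be a probability distribution on S, let T and T̂ be transition kernels from S × A to S (the true dynamics and the learned model dynamics), let R and R̂ be reward kernels with values in a finite set 𝓡 ⊂ ℝ satisfying |ρ| ≤ r_max, with mean rewards r(s,a) = ∑_{ρ} ρ·R(ρ|s,a) and r̂(s,a) = ∑_{ρ} ρ·R̂(ρ|s,a), and let π (the evaluating policy) and π_D (the behavior policy) be policies on (S, A). For a transition kernel and a policy, let the occupancies from μ₀ be defined recursively as usual, and define J(π) = ∑_{t=0}^∞ γ^t ∑_{s,a} P_t^{T,π}(s,a)·r(s,a) and Ĵ(π) = ∑_{t=0}^∞ γ^t ∑_{s,a} P_t^{T̂,π}(s,a)·r̂(s,a). Suppose: (i) for every t ≥ 0, ∑_{s,a} P_t^{T,π_D}(s,a)·D_TV(R(·|s,a) ‖ R̂(·|s,a)) ≤ ε_r; (ii) for every t ≥ 0, ∑_{s,a} P_t^{T,π_D}(s,a)·D_TV(T(·|s,a) ‖ T̂(·|s,a)) ≤ ε_m; (iii) max_{s∈S} D_TV(π(·|s) ‖ π_D(·|s)) ≤ ε_π. Then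 J(π) ≥ Ĵ(π) − 2·r_max·((ε_r + 2·ε_π)/(1−γ) + γ·(2·ε_π + ε_m)/(1−γ)²). -/

import Mathlib

open Finset

/-- Total-variation distance between two functions on a finite type. -/
noncomputable def tv {X : Type*} [Fintype X] (p q : X → ℝ) : ℝ :=
  (1 / 2) * ∑ x, |p x - q x|

/-- Total-variation distance between two functions restricted to a finite set. -/
noncomputable def tvOn {X : Type*} (F : Finset X) (p q : X → ℝ) : ℝ :=
  (1 / 2) * ∑ x ∈ F, |p x - q x|

/-- The state-action occupancy at time `t` from initial state distribution `μ0`, under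
policy `π` and transition kernel `T`. -/
noncomputable def occ {S A : Type*} [Fintype S] [Fintype A]
    (μ0 : S → ℝ) (π : S → A → ℝ) (T : S × A → S → ℝ) : ℕ → S × A → ℝ
  | 0, sa => μ0 sa.1 * π sa.1 sa.2
  | t + 1, x => ∑ sa : S × A, occ μ0 π T t sa * T sa x.1 * π x.1 x.2

section aux
variable {S A : Type*} [Fintype S] [Fintype A]

lemma occ_nonneg (μ0 : S → ℝ) (π : S → A → ℝ) (U : S × A → S → ℝ)
    (hμ0 : ∀ s, 0 ≤ μ0 s) (hπ : ∀ s a, 0 ≤ π s a) (hU : ∀ sa s', 0 ≤ U sa s') :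
    ∀ t sa, 0 ≤ occ μ0 π U t sa := by
  intro t
  induction t with
  | zero => intro sa; exact mul_nonneg (hμ0 _) (hπ _ _)
  | succ t ih =>
    intro sa
    exact Finset.sum_nonneg fun x _ => mul_nonneg (mul_nonneg (ih x) (hU _ _)) (hπ _ _)

lemma occ_sum (μ0 : S → ℝ) (π : S → A → ℝ) (U : S × A → S → ℝ)
    (hμ0 : ∑ s, μ0 s = 1) (hπ : ∀ s, ∑ a, π s a = 1) (hU : ∀ sa, ∑ s', U sa s' = 1) :
    ∀ t, ∑ sa : S × A, occ μ0 π U t sa = 1 := by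
  intro t
  induction t with
  | zero =>
    show ∑ sa : S × A, μ0 sa.1 * π sa.1 sa.2 = 1
    rw [Fintype.sum_prod_type]
    simp_rw [← Finset.mul_sum, hπ, mul_one]
    exact hμ0
  | succ t ih =>
    show ∑ x : S × A, ∑ sa : S × A, occ μ0 π U t sa * U sa x.1 * π x.1 x.2 = 1
    rw [Finset.sum_comm]
    have h : ∀ sa : S × A,
        ∑ x : S × A, occ μ0 π U t sa * U sa x.1 * π x.1 x.2 = occ μ0 π U t sa := by
      intro sa
      rw [Fintype.sum_prod_type]
      simp_rw [mul_assoc, ← Finset.mul_sum, hπ, mul_one, hU, mul_one]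
    simp_rw [h]
    exact ih


lemma policy_shift (μ0 : S → ℝ) (π πD : S → A → ℝ) (U : S × A → S → ℝ)
    (hμ0n : ∀ s, 0 ≤ μ0 s) (hμ0 : ∑ s, μ0 s = 1)
    (hπn : ∀ s a, 0 ≤ π s a) (hπ1 : ∀ s, ∑ a, π s a = 1)
    (hπDn : ∀ s a, 0 ≤ πD s a) (hπD1 : ∀ s, ∑ a, πD s a = 1)
    (hUn : ∀ sa s', 0 ≤ U sa s') (hU1 : ∀ sa, ∑ s', U sa s' = 1)
    (ε : ℝ) (hε : ∀ s, ∑ a, |π s a - πD s a| ≤ 2 * ε) :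
    ∀ t, ∑ sa : S × A, |occ μ0 π U t sa - occ μ0 πD U t sa| ≤ 2 * (t + 1) * ε := by
  intro t
  induction t with
  | zero =>
    simp only [occ, Nat.cast_zero]
    rw [Fintype.sum_prod_type]
    have h : ∀ s : S, ∑ a, |μ0 s * π s a - μ0 s * πD s a| ≤ μ0 s * (2 * ε) := by
      intro s
      have : ∀ a, |μ0 s * π s a - μ0 s * πD s a| = μ0 s * |π s a - πD s a| := by
        intro a; rw [← mul_sub, abs_mul, abs_of_nonneg (hμ0n s)]
      simp_rw [this, ← Finset.mul_sum]
      exact mul_le_mul_of_nonneg_left (hε s) (hμ0n s)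
    calc ∑ s, ∑ a, |μ0 s * π s a - μ0 s * πD s a| ≤ ∑ s, μ0 s * (2 * ε) :=
          Finset.sum_le_sum fun s _ => h s
      _ = 2 * (0 + 1) * ε := by rw [← Finset.sum_mul, hμ0]; ring
  | succ t ih =>
    have key : ∑ sa : S × A, |occ μ0 π U (t+1) sa - occ μ0 πD U (t+1) sa|
        ≤ (∑ sa : S × A, |occ μ0 π U t sa - occ μ0 πD U t sa|) + 2 * ε := by
      have step : ∀ x : S × A, |occ μ0 π U (t+1) x - occ μ0 πD U (t+1) x|
          ≤ ∑ sa : S × A, (|occ μ0 π U t sa - occ μ0 πD U t sa| * U sa x.1 * π x.1 x.2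
              + occ μ0 πD U t sa * U sa x.1 * |π x.1 x.2 - πD x.1 x.2|) := by
        intro x
        show |(∑ sa : S × A, occ μ0 π U t sa * U sa x.1 * π x.1 x.2)
            - ∑ sa : S × A, occ μ0 πD U t sa * U sa x.1 * πD x.1 x.2| ≤ _
        rw [← Finset.sum_sub_distrib]
        refine (Finset.abs_sum_le_sum_abs _ _).trans (Finset.sum_le_sum fun sa _ => ?_)
        have : occ μ0 π U t sa * U sa x.1 * π x.1 x.2
            - occ μ0 πD U t sa * U sa x.1 * πD x.1 x.2
            = (occ μ0 π U t sa - occ μ0 πD U t sa) * U sa x.1 * π x.1 x.2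
              + occ μ0 πD U t sa * U sa x.1 * (π x.1 x.2 - πD x.1 x.2) := by ring
        rw [this]
        refine (abs_add_le _ _).trans (add_le_add ?_ ?_)
        · rw [abs_mul, abs_mul, abs_of_nonneg (hUn sa x.1), abs_of_nonneg (hπn x.1 x.2)]
        · rw [abs_mul, abs_mul,
            abs_of_nonneg (occ_nonneg μ0 πD U hμ0n hπDn hUn t sa), abs_of_nonneg (hUn sa x.1)]
      calc ∑ x : S × A, |occ μ0 π U (t+1) x - occ μ0 πD U (t+1) x|
          ≤ ∑ x : S × A, ∑ sa : S × A,
              (|occ μ0 π U t sa - occ μ0 πD U t sa| * U sa x.1 * π x.1 x.2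
                + occ μ0 πD U t sa * U sa x.1 * |π x.1 x.2 - πD x.1 x.2|) :=
            Finset.sum_le_sum fun x _ => step x
        _ = (∑ x : S × A, ∑ sa : S × A,
              |occ μ0 π U t sa - occ μ0 πD U t sa| * U sa x.1 * π x.1 x.2)
            + ∑ x : S × A, ∑ sa : S × A,
              occ μ0 πD U t sa * U sa x.1 * |π x.1 x.2 - πD x.1 x.2| := by
            rw [← Finset.sum_add_distrib]
            exact Finset.sum_congr rfl fun x _ => Finset.sum_add_distrib
        _ ≤ (∑ sa : S × A, |occ μ0 π U t sa - occ μ0 πD U t sa|) + 2 * ε := by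
            refine add_le_add (le_of_eq ?_) ?_
            · rw [Finset.sum_comm]
              refine Finset.sum_congr rfl fun sa _ => ?_
              rw [Fintype.sum_prod_type]
              simp_rw [mul_assoc, ← Finset.mul_sum, hπ1, mul_one, hU1, mul_one]
            · -- second term
              have e1 : ∑ x : S × A, ∑ sa : S × A,
                  occ μ0 πD U t sa * U sa x.1 * |π x.1 x.2 - πD x.1 x.2|
                  = ∑ s' : S, (∑ sa : S × A, occ μ0 πD U t sa * U sa s')
                      * ∑ a' : A, |π s' a' - πD s' a'| := by
                rw [Fintype.sum_prod_type]
                refine Finset.sum_congr rfl fun s' _ => ?_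
                rw [Finset.mul_sum]
                refine Finset.sum_congr rfl fun a' _ => ?_
                rw [Finset.sum_mul]
              rw [e1]
              have e2 : ∀ s' : S, (∑ sa : S × A, occ μ0 πD U t sa * U sa s')
                  * ∑ a' : A, |π s' a' - πD s' a'|
                  ≤ (∑ sa : S × A, occ μ0 πD U t sa * U sa s') * (2 * ε) := by
                intro s'
                exact mul_le_mul_of_nonneg_left (hε s')
                  (Finset.sum_nonneg fun sa _ =>
                    mul_nonneg (occ_nonneg μ0 πD U hμ0n hπDn hUn t sa) (hUn sa s'))
              calc ∑ s' : S, (∑ sa : S × A, occ μ0 πD U t sa * U sa s')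
                    * ∑ a' : A, |π s' a' - πD s' a'|
                  ≤ ∑ s' : S, (∑ sa : S × A, occ μ0 πD U t sa * U sa s') * (2 * ε) :=
                    Finset.sum_le_sum fun s' _ => e2 s'
                _ = 2 * ε := by
                    rw [← Finset.sum_mul, Finset.sum_comm]
                    simp_rw [← Finset.mul_sum, hU1, mul_one,
                      occ_sum μ0 πD U hμ0 hπD1 hU1 t, one_mul]
    refine key.trans ?_
    have h2 : (2:ℝ) * (t + 1) * ε + 2 * ε = 2 * ((t+1 : ℕ) + 1) * ε := by push_cast; ring
    linarith [ih]

lemma model_shift (μ0 : S → ℝ) (πD : S → A → ℝ) (T That : S × A → S → ℝ)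
    (hμ0n : ∀ s, 0 ≤ μ0 s)
    (hπDn : ∀ s a, 0 ≤ πD s a) (hπD1 : ∀ s, ∑ a, πD s a = 1)
    (hTn : ∀ sa s', 0 ≤ T sa s')
    (hThatn : ∀ sa s', 0 ≤ That sa s') (hThat1 : ∀ sa, ∑ s', That sa s' = 1)
    (ε : ℝ)
    (hε : ∀ t, ∑ sa : S × A, occ μ0 πD T t sa * ∑ s', |T sa s' - That sa s'| ≤ 2 * ε) :
    ∀ t, ∑ sa : S × A, |occ μ0 πD T t sa - occ μ0 πD That t sa| ≤ 2 * t * ε := by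
  intro t
  induction t with
  | zero => simp [occ]
  | succ t ih =>
    have key : ∑ sa : S × A, |occ μ0 πD T (t+1) sa - occ μ0 πD That (t+1) sa|
        ≤ (∑ sa : S × A, |occ μ0 πD T t sa - occ μ0 πD That t sa|) + 2 * ε := by
      have step : ∀ x : S × A, |occ μ0 πD T (t+1) x - occ μ0 πD That (t+1) x|
          ≤ ∑ sa : S × A, (|occ μ0 πD T t sa - occ μ0 πD That t sa| * That sa x.1 * πD x.1 x.2
              + occ μ0 πD T t sa * |T sa x.1 - That sa x.1| * πD x.1 x.2) := by
        intro x
        show |(∑ sa : S × A, occ μ0 πD T t sa * T sa x.1 * πD x.1 x.2)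
            - ∑ sa : S × A, occ μ0 πD That t sa * That sa x.1 * πD x.1 x.2| ≤ _
        rw [← Finset.sum_sub_distrib]
        refine (Finset.abs_sum_le_sum_abs _ _).trans (Finset.sum_le_sum fun sa _ => ?_)
        have e : occ μ0 πD T t sa * T sa x.1 * πD x.1 x.2
            - occ μ0 πD That t sa * That sa x.1 * πD x.1 x.2
            = (occ μ0 πD T t sa - occ μ0 πD That t sa) * That sa x.1 * πD x.1 x.2
              + occ μ0 πD T t sa * (T sa x.1 - That sa x.1) * πD x.1 x.2 := by ring
        rw [e]
        refine (abs_add_le _ _).trans (add_le_add ?_ ?_)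
        · rw [abs_mul, abs_mul, abs_of_nonneg (hThatn sa x.1), abs_of_nonneg (hπDn x.1 x.2)]
        · rw [abs_mul, abs_mul,
            abs_of_nonneg (occ_nonneg μ0 πD T hμ0n hπDn hTn t sa), abs_of_nonneg (hπDn x.1 x.2)]
      calc ∑ x : S × A, |occ μ0 πD T (t+1) x - occ μ0 πD That (t+1) x|
          ≤ ∑ x : S × A, ∑ sa : S × A,
              (|occ μ0 πD T t sa - occ μ0 πD That t sa| * That sa x.1 * πD x.1 x.2
                + occ μ0 πD T t sa * |T sa x.1 - That sa x.1| * πD x.1 x.2) :=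
            Finset.sum_le_sum fun x _ => step x
        _ = (∑ x : S × A, ∑ sa : S × A,
              |occ μ0 πD T t sa - occ μ0 πD That t sa| * That sa x.1 * πD x.1 x.2)
            + ∑ x : S × A, ∑ sa : S × A,
              occ μ0 πD T t sa * |T sa x.1 - That sa x.1| * πD x.1 x.2 := by
            rw [← Finset.sum_add_distrib]
            exact Finset.sum_congr rfl fun x _ => Finset.sum_add_distrib
        _ ≤ (∑ sa : S × A, |occ μ0 πD T t sa - occ μ0 πD That t sa|) + 2 * ε := by
            refine add_le_add (le_of_eq ?_) ?_
            · rw [Finset.sum_comm]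
              refine Finset.sum_congr rfl fun sa _ => ?_
              rw [Fintype.sum_prod_type]
              simp_rw [mul_assoc, ← Finset.mul_sum, hπD1, mul_one, hThat1, mul_one]
            · have e1 : ∑ x : S × A, ∑ sa : S × A,
                  occ μ0 πD T t sa * |T sa x.1 - That sa x.1| * πD x.1 x.2
                  = ∑ sa : S × A, occ μ0 πD T t sa * ∑ s', |T sa s' - That sa s'| := by
                rw [Finset.sum_comm]
                refine Finset.sum_congr rfl fun sa _ => ?_
                rw [Fintype.sum_prod_type]
                simp_rw [mul_assoc, ← Finset.mul_sum, hπD1, mul_one]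
              rw [e1]
              exact hε t
    refine key.trans ?_
    push_cast
    linarith [ih]

lemma abs_sum_sub_mul {X : Type*} [Fintype X] (P Q g : X → ℝ) (C : ℝ)
    (hg : ∀ x, |g x| ≤ C) :
    |(∑ x, P x * g x) - ∑ x, Q x * g x| ≤ C * ∑ x, |P x - Q x| := by
  rw [← Finset.sum_sub_distrib]
  refine (Finset.abs_sum_le_sum_abs _ _).trans ?_
  rw [Finset.mul_sum]
  refine Finset.sum_le_sum fun x _ => ?_
  rw [← sub_mul, abs_mul]
  calc |P x - Q x| * |g x| ≤ |P x - Q x| * C :=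
        mul_le_mul_of_nonneg_left (hg x) (abs_nonneg _)
    _ = C * |P x - Q x| := mul_comm _ _

end aux

/-- Main theorem: the return of the evaluating policy π in the true environment is at
least its return in the learned world model minus
2·r_max·((ε_r + 2·ε_π)/(1−γ) + γ·(2·ε_π + ε_m)/(1−γ)²). -/
theorem return_gap_main
    {S A : Type*} [Fintype S] [Fintype A] [Nonempty S] [Nonempty A]
    (γ : ℝ) (hγ0 : 0 ≤ γ) (hγ1 : γ < 1)
    (μ0 : S → ℝ) (hμ0 : (∀ s, 0 ≤ μ0 s) ∧ ∑ s, μ0 s = 1)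
    (T That : S × A → S → ℝ)
    (hT : ∀ sa, (∀ s', 0 ≤ T sa s') ∧ ∑ s', T sa s' = 1)
    (hThat : ∀ sa, (∀ s', 0 ≤ That sa s') ∧ ∑ s', That sa s' = 1)
    (Rset : Finset ℝ) (rmax : ℝ)
    (hbound : ∀ ρ ∈ Rset, |ρ| ≤ rmax)
    (R Rhat : S × A → ℝ → ℝ)
    (hR : ∀ sa, (∀ ρ ∈ Rset, 0 ≤ R sa ρ) ∧ ∑ ρ ∈ Rset, R sa ρ = 1)
    (hRhat : ∀ sa, (∀ ρ ∈ Rset, 0 ≤ Rhat sa ρ) ∧ ∑ ρ ∈ Rset, Rhat sa ρ = 1)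
    (π πD : S → A → ℝ)
    (hπ : ∀ s, (∀ a, 0 ≤ π s a) ∧ ∑ a, π s a = 1)
    (hπD : ∀ s, (∀ a, 0 ≤ πD s a) ∧ ∑ a, πD s a = 1)
    (εr εm επ : ℝ)
    (hεr : ∀ t, ∑ sa : S × A, occ μ0 πD T t sa * tvOn Rset (R sa) (Rhat sa) ≤ εr)
    (hεm : ∀ t, ∑ sa : S × A, occ μ0 πD T t sa * tv (T sa) (That sa) ≤ εm)
    (hεπ : Finset.univ.sup' Finset.univ_nonempty (fun s => tv (π s) (πD s)) ≤ επ) :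
    (∑' t : ℕ, γ ^ t * ∑ sa : S × A, occ μ0 π T t sa * ∑ ρ ∈ Rset, ρ * R sa ρ)
      ≥ (∑' t : ℕ, γ ^ t * ∑ sa : S × A, occ μ0 π That t sa * ∑ ρ ∈ Rset, ρ * Rhat sa ρ)
        - 2 * rmax * ((εr + 2 * επ) / (1 - γ) + γ * (2 * επ + εm) / (1 - γ) ^ 2) := by
  obtain ⟨hμ0n, hμ01⟩ := hμ0
  have hTn : ∀ sa s', 0 ≤ T sa s' := fun sa => (hT sa).1
  have hT1 : ∀ sa, ∑ s', T sa s' = 1 := fun sa => (hT sa).2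
  have hThatn : ∀ sa s', 0 ≤ That sa s' := fun sa => (hThat sa).1
  have hThat1 : ∀ sa, ∑ s', That sa s' = 1 := fun sa => (hThat sa).2
  have hπn : ∀ s a, 0 ≤ π s a := fun s => (hπ s).1
  have hπ1 : ∀ s, ∑ a, π s a = 1 := fun s => (hπ s).2
  have hπDn : ∀ s a, 0 ≤ πD s a := fun s => (hπD s).1
  have hπD1 : ∀ s, ∑ a, πD s a = 1 := fun s => (hπD s).2
  -- rmax is nonnegative
  have hRne : Rset.Nonempty := by
    rcases Finset.eq_empty_or_nonempty Rset with h | h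
    · exfalso
      have h1 := (hR (Classical.arbitrary (S × A))).2
      rw [h] at h1; simp at h1
    · exact h
  obtain ⟨ρ0, hρ0⟩ := hRne
  have hrmax : 0 ≤ rmax := le_trans (abs_nonneg ρ0) (hbound ρ0 hρ0)
  -- policy TV bounds
  have hεπ' : ∀ s, ∑ a, |π s a - πD s a| ≤ 2 * επ := by
    intro s
    have h1 : tv (π s) (πD s) ≤ επ :=
      le_trans (Finset.le_sup' (fun s => tv (π s) (πD s)) (Finset.mem_univ s)) hεπ
    rw [tv] at h1; linarith
  -- model TV bounds
  have hεm' : ∀ t, ∑ sa : S × A, occ μ0 πD T t sa * ∑ s', |T sa s' - That sa s'|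
      ≤ 2 * εm := by
    intro t
    have h1 : ∀ sa : S × A, occ μ0 πD T t sa * ∑ s', |T sa s' - That sa s'|
        = 2 * (occ μ0 πD T t sa * tv (T sa) (That sa)) := by
      intro sa; rw [tv]; ring
    simp_rw [h1, ← Finset.mul_sum]
    have h2 := hεm t
    linarith
  -- mean rewards are bounded by rmax
  have habs : ∀ (Q : S × A → ℝ → ℝ),
      (∀ sa, (∀ ρ ∈ Rset, 0 ≤ Q sa ρ) ∧ ∑ ρ ∈ Rset, Q sa ρ = 1) →
      ∀ sa, |∑ ρ ∈ Rset, ρ * Q sa ρ| ≤ rmax := by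
    intro Q hQ sa
    refine (Finset.abs_sum_le_sum_abs _ _).trans ?_
    calc ∑ ρ ∈ Rset, |ρ * Q sa ρ| ≤ ∑ ρ ∈ Rset, rmax * Q sa ρ := by
          refine Finset.sum_le_sum fun ρ hρ => ?_
          rw [abs_mul, abs_of_nonneg ((hQ sa).1 ρ hρ)]
          exact mul_le_mul_of_nonneg_right (hbound ρ hρ) ((hQ sa).1 ρ hρ)
      _ = rmax := by rw [← Finset.mul_sum, (hQ sa).2, mul_one]
  have hrb : ∀ sa, |∑ ρ ∈ Rset, ρ * R sa ρ| ≤ rmax := habs R hR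
  have hrhb : ∀ sa, |∑ ρ ∈ Rset, ρ * Rhat sa ρ| ≤ rmax := habs Rhat hRhat
  -- reward mean difference bound
  have hrd : ∀ sa, |(∑ ρ ∈ Rset, ρ * R sa ρ) - ∑ ρ ∈ Rset, ρ * Rhat sa ρ|
      ≤ rmax * ∑ ρ ∈ Rset, |R sa ρ - Rhat sa ρ| := by
    intro sa
    rw [← Finset.sum_sub_distrib]
    refine (Finset.abs_sum_le_sum_abs _ _).trans ?_
    rw [Finset.mul_sum]
    refine Finset.sum_le_sum fun ρ hρ => ?_
    rw [← mul_sub, abs_mul]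
    exact mul_le_mul_of_nonneg_right (hbound ρ hρ) (abs_nonneg _)
  -- occupancy shift bounds
  have dpiT := policy_shift μ0 π πD T hμ0n hμ01 hπn hπ1 hπDn hπD1 hTn hT1 επ hεπ'
  have dpiThat := policy_shift μ0 π πD That hμ0n hμ01 hπn hπ1 hπDn hπD1 hThatn hThat1 επ hεπ'
  have dmod := model_shift μ0 πD T That hμ0n hπDn hπD1 hTn hThatn hThat1 εm hεm'
  -- per-step return gap bound
  have key : ∀ t : ℕ,
      |(∑ sa : S × A, occ μ0 π T t sa * ∑ ρ ∈ Rset, ρ * R sa ρ)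
        - ∑ sa : S × A, occ μ0 π That t sa * ∑ ρ ∈ Rset, ρ * Rhat sa ρ|
      ≤ 2 * rmax * (εr + 2 * επ) + 2 * rmax * (2 * επ + εm) * t := by
    intro t
    have b1 : |(∑ sa : S × A, occ μ0 π T t sa * ∑ ρ ∈ Rset, ρ * R sa ρ)
        - ∑ sa : S × A, occ μ0 πD T t sa * ∑ ρ ∈ Rset, ρ * R sa ρ|
        ≤ rmax * (2 * (t + 1) * επ) :=
      (abs_sum_sub_mul _ _ _ rmax hrb).trans (mul_le_mul_of_nonneg_left (dpiT t) hrmax)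
    have b4 : |(∑ sa : S × A, occ μ0 πD That t sa * ∑ ρ ∈ Rset, ρ * Rhat sa ρ)
        - ∑ sa : S × A, occ μ0 π That t sa * ∑ ρ ∈ Rset, ρ * Rhat sa ρ|
        ≤ rmax * (2 * (t + 1) * επ) := by
      refine (abs_sum_sub_mul _ _ _ rmax hrhb).trans (mul_le_mul_of_nonneg_left ?_ hrmax)
      calc ∑ sa : S × A, |occ μ0 πD That t sa - occ μ0 π That t sa|
          = ∑ sa : S × A, |occ μ0 π That t sa - occ μ0 πD That t sa| := by
            simp_rw [abs_sub_comm]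
        _ ≤ _ := dpiThat t
    have b3 : |(∑ sa : S × A, occ μ0 πD T t sa * ∑ ρ ∈ Rset, ρ * Rhat sa ρ)
        - ∑ sa : S × A, occ μ0 πD That t sa * ∑ ρ ∈ Rset, ρ * Rhat sa ρ|
        ≤ rmax * (2 * t * εm) :=
      (abs_sum_sub_mul _ _ _ rmax hrhb).trans (mul_le_mul_of_nonneg_left (dmod t) hrmax)
    have b2 : |(∑ sa : S × A, occ μ0 πD T t sa * ∑ ρ ∈ Rset, ρ * R sa ρ)
        - ∑ sa : S × A, occ μ0 πD T t sa * ∑ ρ ∈ Rset, ρ * Rhat sa ρ|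
        ≤ rmax * (2 * εr) := by
      rw [← Finset.sum_sub_distrib]
      have e : ∀ sa : S × A,
          occ μ0 πD T t sa * (∑ ρ ∈ Rset, ρ * R sa ρ)
            - occ μ0 πD T t sa * ∑ ρ ∈ Rset, ρ * Rhat sa ρ
          = occ μ0 πD T t sa * ((∑ ρ ∈ Rset, ρ * R sa ρ) - ∑ ρ ∈ Rset, ρ * Rhat sa ρ) :=
        fun sa => by ring
      simp_rw [e]
      refine (Finset.abs_sum_le_sum_abs _ _).trans ?_
      have e2 : ∀ sa : S × A,
          |occ μ0 πD T t sa * ((∑ ρ ∈ Rset, ρ * R sa ρ) - ∑ ρ ∈ Rset, ρ * Rhat sa ρ)|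
          ≤ rmax * 2 * (occ μ0 πD T t sa * tvOn Rset (R sa) (Rhat sa)) := by
        intro sa
        rw [abs_mul, abs_of_nonneg (occ_nonneg μ0 πD T hμ0n hπDn hTn t sa), tvOn]
        calc occ μ0 πD T t sa * |(∑ ρ ∈ Rset, ρ * R sa ρ) - ∑ ρ ∈ Rset, ρ * Rhat sa ρ|
            ≤ occ μ0 πD T t sa * (rmax * ∑ ρ ∈ Rset, |R sa ρ - Rhat sa ρ|) :=
              mul_le_mul_of_nonneg_left (hrd sa) (occ_nonneg μ0 πD T hμ0n hπDn hTn t sa)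
          _ = rmax * 2 * (occ μ0 πD T t sa
                * (1 / 2 * ∑ ρ ∈ Rset, |R sa ρ - Rhat sa ρ|)) := by ring
      refine (Finset.sum_le_sum fun sa _ => e2 sa).trans ?_
      rw [← Finset.mul_sum]
      calc rmax * 2 * ∑ sa : S × A, occ μ0 πD T t sa * tvOn Rset (R sa) (Rhat sa)
          ≤ rmax * 2 * εr :=
            mul_le_mul_of_nonneg_left (hεr t) (by positivity)
        _ = rmax * (2 * εr) := by ring
    have chain : |(∑ sa : S × A, occ μ0 π T t sa * ∑ ρ ∈ Rset, ρ * R sa ρ)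
        - ∑ sa : S × A, occ μ0 π That t sa * ∑ ρ ∈ Rset, ρ * Rhat sa ρ|
        ≤ |(∑ sa : S × A, occ μ0 π T t sa * ∑ ρ ∈ Rset, ρ * R sa ρ)
            - ∑ sa : S × A, occ μ0 πD T t sa * ∑ ρ ∈ Rset, ρ * R sa ρ|
          + (|(∑ sa : S × A, occ μ0 πD T t sa * ∑ ρ ∈ Rset, ρ * R sa ρ)
              - ∑ sa : S × A, occ μ0 πD T t sa * ∑ ρ ∈ Rset, ρ * Rhat sa ρ|
            + (|(∑ sa : S × A, occ μ0 πD T t sa * ∑ ρ ∈ Rset, ρ * Rhat sa ρ)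
                - ∑ sa : S × A, occ μ0 πD That t sa * ∑ ρ ∈ Rset, ρ * Rhat sa ρ|
              + |(∑ sa : S × A, occ μ0 πD That t sa * ∑ ρ ∈ Rset, ρ * Rhat sa ρ)
                - ∑ sa : S × A, occ μ0 π That t sa * ∑ ρ ∈ Rset, ρ * Rhat sa ρ|)) := by
      refine (abs_sub_le _ _ _).trans (add_le_add_right ?_ _)
      refine (abs_sub_le _ _ _).trans (add_le_add_right ?_ _)
      exact abs_sub_le _ _ _
    have := chain.trans (add_le_add b1 (add_le_add b2 (add_le_add b3 b4)))
    push_cast at this ⊢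
    linarith
  -- boundedness of per-step returns
  have hbX : ∀ (U : S × A → S → ℝ), (∀ sa s', 0 ≤ U sa s') → (∀ sa, ∑ s', U sa s' = 1) →
      ∀ (g : S × A → ℝ), (∀ sa, |g sa| ≤ rmax) →
      ∀ t : ℕ, |∑ sa : S × A, occ μ0 π U t sa * g sa| ≤ rmax := by
    intro U hUn hU1 g hg t
    refine (Finset.abs_sum_le_sum_abs _ _).trans ?_
    calc ∑ sa : S × A, |occ μ0 π U t sa * g sa|
        ≤ ∑ sa : S × A, occ μ0 π U t sa * rmax := by
          refine Finset.sum_le_sum fun sa _ => ?_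
          rw [abs_mul, abs_of_nonneg (occ_nonneg μ0 π U hμ0n hπn hUn t sa)]
          exact mul_le_mul_of_nonneg_left (hg sa) (occ_nonneg μ0 π U hμ0n hπn hUn t sa)
      _ = rmax := by rw [← Finset.sum_mul, occ_sum μ0 π U hμ01 hπ1 hU1 t, one_mul]
  have hbX1 := hbX T hTn hT1 _ hrb
  have hbX2 := hbX That hThatn hThat1 _ hrhb
  -- summability
  have hγn : ‖γ‖ < 1 := by rw [Real.norm_eq_abs, abs_of_nonneg hγ0]; exact hγ1
  have sgeo : Summable (fun t : ℕ => γ ^ t) := summable_geometric_of_lt_one hγ0 hγ1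
  have slin : Summable (fun t : ℕ => (t : ℝ) * γ ^ t) := by
    have h := summable_pow_mul_geometric_of_norm_lt_one 1 hγn
    simpa using h
  have sumbd : ∀ (f : ℕ → ℝ), (∀ t, |f t| ≤ rmax) → Summable (fun t : ℕ => γ ^ t * f t) := by
    intro f hf
    refine Summable.of_norm_bounded (sgeo.mul_left rmax) (fun t => ?_)
    rw [Real.norm_eq_abs, abs_mul, abs_of_nonneg (pow_nonneg hγ0 t)]
    calc γ ^ t * |f t| ≤ γ ^ t * rmax :=
          mul_le_mul_of_nonneg_left (hf t) (pow_nonneg hγ0 t)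
      _ = rmax * γ ^ t := mul_comm _ _
  have sumX : Summable (fun t : ℕ =>
      γ ^ t * ∑ sa : S × A, occ μ0 π T t sa * ∑ ρ ∈ Rset, ρ * R sa ρ) := sumbd _ hbX1
  have sumY : Summable (fun t : ℕ =>
      γ ^ t * ∑ sa : S × A, occ μ0 π That t sa * ∑ ρ ∈ Rset, ρ * Rhat sa ρ) := sumbd _ hbX2
  have sumZ : Summable (fun t : ℕ =>
      2 * rmax * (εr + 2 * επ) * γ ^ t + 2 * rmax * (2 * επ + εm) * ((t : ℝ) * γ ^ t)) :=
    (sgeo.mul_left _).add (slin.mul_left _)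
  have tsumZ : ∑' t : ℕ,
      (2 * rmax * (εr + 2 * επ) * γ ^ t + 2 * rmax * (2 * επ + εm) * ((t : ℝ) * γ ^ t))
      = 2 * rmax * (εr + 2 * επ) * (1 - γ)⁻¹
        + 2 * rmax * (2 * επ + εm) * (γ / (1 - γ) ^ 2) := by
    rw [Summable.tsum_add (sgeo.mul_left _) (slin.mul_left _), tsum_mul_left, tsum_mul_left,
      tsum_geometric_of_lt_one hγ0 hγ1, tsum_coe_mul_geometric_of_norm_lt_one hγn]
  have hdiff : (∑' t : ℕ, γ ^ t * ∑ sa : S × A, occ μ0 π That t sa * ∑ ρ ∈ Rset, ρ * Rhat sa ρ)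
      - (∑' t : ℕ, γ ^ t * ∑ sa : S × A, occ μ0 π T t sa * ∑ ρ ∈ Rset, ρ * R sa ρ)
      ≤ 2 * rmax * (εr + 2 * επ) * (1 - γ)⁻¹
        + 2 * rmax * (2 * επ + εm) * (γ / (1 - γ) ^ 2) := by
    rw [← Summable.tsum_sub sumY sumX]
    refine le_trans (Summable.tsum_le_tsum ?_ (sumY.sub sumX) sumZ) (le_of_eq tsumZ)
    intro t
    have hk := key t
    have h1 : (∑ sa : S × A, occ μ0 π That t sa * ∑ ρ ∈ Rset, ρ * Rhat sa ρ)
        - (∑ sa : S × A, occ μ0 π T t sa * ∑ ρ ∈ Rset, ρ * R sa ρ)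
        ≤ 2 * rmax * (εr + 2 * επ) + 2 * rmax * (2 * επ + εm) * t := by
      have h2 := neg_abs_le ((∑ sa : S × A, occ μ0 π T t sa * ∑ ρ ∈ Rset, ρ * R sa ρ)
        - ∑ sa : S × A, occ μ0 π That t sa * ∑ ρ ∈ Rset, ρ * Rhat sa ρ)
      linarith
    calc γ ^ t * (∑ sa : S × A, occ μ0 π That t sa * ∑ ρ ∈ Rset, ρ * Rhat sa ρ)
          - γ ^ t * (∑ sa : S × A, occ μ0 π T t sa * ∑ ρ ∈ Rset, ρ * R sa ρ)
        = γ ^ t * ((∑ sa : S × A, occ μ0 π That t sa * ∑ ρ ∈ Rset, ρ * Rhat sa ρ)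
          - ∑ sa : S × A, occ μ0 π T t sa * ∑ ρ ∈ Rset, ρ * R sa ρ) := by ring
      _ ≤ γ ^ t * (2 * rmax * (εr + 2 * επ) + 2 * rmax * (2 * επ + εm) * t) :=
          mul_le_mul_of_nonneg_left h1 (pow_nonneg hγ0 t)
      _ = 2 * rmax * (εr + 2 * επ) * γ ^ t
          + 2 * rmax * (2 * επ + εm) * ((t : ℝ) * γ ^ t) := by ring
  have heq : 2 * rmax * (εr + 2 * επ) * (1 - γ)⁻¹
      + 2 * rmax * (2 * επ + εm) * (γ / (1 - γ) ^ 2)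
      = 2 * rmax * ((εr + 2 * επ) / (1 - γ) + γ * (2 * επ + εm) / (1 - γ) ^ 2) := by
    ring
  rw [heq] at hdiff
  linarith
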